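/- arXiv:2204.11492 — 2 statements merged into one kernel-verified Lean document; each statement's English description precedes it below -/
import Mathlib

section
/- Let G be a group, N a finite-index normal subgroup, R a right transversal with 1 ∈ R, and y : G → R defined by y(nr) = r. If g ∈ G satisfies σ^g(y) = y, then g ∈ N. -/
/-- The shift action: `σ^g(x)(h) = x(g⁻¹h)`. -/
def shiftAct {G A : Type*} [Group G] (g : G) (x : G → A) : G → A :=
  fun h => x (g⁻¹ * h)

theorem locked_config_stabilizer_in_N {G : Type*} [Group G]
    (N : Subgroup G) [N.Normal] [N.FiniteIndex]
    (R : Set G) (h1R : (1 : G) ∈ R)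
    -- every `g ∈ G` decomposes uniquely as `g = n * r` with `n ∈ N`, `r ∈ R`
    (hdec : ∀ g : G, ∃! r : G, r ∈ R ∧ g * r⁻¹ ∈ N)
    (y : G → G)
    (hy : ∀ n r : G, n ∈ N → r ∈ R → y (n * r) = r)
    (g : G) (hg : shiftAct g y = y) :
    g ∈ N := by
  obtain ⟨r, ⟨hrR, hrN⟩, _⟩ := hdec g
  have hyg : y g = r := by
    have := hy (g * r⁻¹) r hrN hrR
    simpa using this
  have h1 : y 1 = 1 := by simpa using hy 1 1 N.one_mem h1R
  have key := congrFun hg g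
  simp only [shiftAct, inv_mul_cancel] at key
  rw [h1, hyg] at key
  rw [← key] at hrN
  simpa using hrN
end

section
/- For n, m ≥ 2, the subgroup of the torus knot group Λ(n,m) = ⟨a, b | aⁿ = bᵐ⟩ generated by aⁿ and ba is isomorphic to ℤ², i.e. these two elements commute and generate a free abelian group of rank 2. -/
/-- Relators of the torus knot group `Λ(n,m) = ⟨a, b | aⁿ = bᵐ⟩`. -/
def torusRels (n m : ℕ) : Set (FreeGroup (Fin 2)) :=
  {FreeGroup.of 0 ^ n * (FreeGroup.of 1 ^ m)⁻¹}

/-- The torus knot group `Λ(n,m)`. -/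
def TorusKnotGroup (n m : ℕ) := PresentedGroup (torusRels n m)

instance (n m : ℕ) : Group (TorusKnotGroup n m) := by
  unfold TorusKnotGroup; infer_instance

/-- The generator `a` of `Λ(n,m)`. -/
def tkA (n m : ℕ) : TorusKnotGroup n m := PresentedGroup.of 0

/-- The generator `b` of `Λ(n,m)`. -/
def tkB (n m : ℕ) : TorusKnotGroup n m := PresentedGroup.of 1

namespace TKAux
open Monoid.CoprodI

variable {ι : Type*} {M : ι → Type*} [∀ i, Group (M i)]

/-- Alternating list `[u, v, u, v, ...]` of length `2k`. -/
def altList {i j : ι} (u : M i) (v : M j) : ℕ → List (Σ k, M k)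
  | 0 => []
  | k + 1 => ⟨i, u⟩ :: ⟨j, v⟩ :: altList u v k

lemma altList_prod {i j : ι} (u : M i) (v : M j) :
    ∀ k : ℕ, ((altList u v k).map fun l => of l.2).prod = (of u * of v) ^ k
  | 0 => by simp [altList]
  | k + 1 => by
    simp only [altList, List.map_cons, List.prod_cons, altList_prod u v k, pow_succ', mul_assoc]

lemma altList_ne_one {i j : ι} {u : M i} {v : M j} (hu : u ≠ 1) (hv : v ≠ 1) :
    ∀ k : ℕ, ∀ l ∈ altList u v k, l.2 ≠ (1 : M l.1)
  | 0 => by simp [altList]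
  | k + 1 => by
    simp only [altList, List.mem_cons]
    rintro l (rfl | rfl | hl)
    · exact hu
    · exact hv
    · exact altList_ne_one hu hv k l hl

lemma altList_chain_aux {i j : ι} (hij : i ≠ j) (u : M i) (v : M j) :
    ∀ k : ℕ, ((⟨j, v⟩ : Σ k, M k) :: altList u v k).Chain' fun a b => a.1 ≠ b.1
  | 0 => by simp [altList, List.Chain']
  | k + 1 => by
    have h := altList_chain_aux hij u v k
    simp only [altList, List.Chain', List.isChain_cons_cons] at h ⊢
    exact ⟨hij.symm, hij, h⟩

lemma altList_chain {i j : ι} (hij : i ≠ j) (u : M i) (v : M j) (k : ℕ) :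
    (altList u v k).Chain' fun a b => a.1 ≠ b.1 := by
  cases k with
  | zero => simp [altList, List.Chain']
  | succ k =>
    have h := altList_chain_aux hij u v k
    simp only [altList, List.Chain', List.isChain_cons_cons] at h ⊢
    exact ⟨hij, h⟩

theorem mul_of_pow_ne_one [DecidableEq ι] [∀ i, DecidableEq (M i)] {i j : ι} (hij : i ≠ j)
    {u : M i} {v : M j}
    (hu : u ≠ 1) (hv : v ≠ 1) {k : ℕ} (hk : k ≠ 0) : (of u * of v) ^ k ≠ 1 := by
  intro h
  set w : Word M := ⟨altList u v k, altList_ne_one hu hv k, altList_chain hij u v k⟩ with hw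
  have hprod : w.prod = (of u * of v) ^ k := altList_prod u v k
  have hinj : Function.Injective (Word.prod : Word M → Monoid.CoprodI M) := by
    have : (Word.prod : Word M → Monoid.CoprodI M) = Word.equiv.symm := rfl
    rw [this]
    exact Word.equiv.symm.injective
  have : w = Word.empty := hinj (by rw [hprod, h, Word.prod_empty])
  have : w.toList = [] := by rw [this]; rfl
  rw [hw] at this
  cases k with
  | zero => exact hk rfl
  | succ k => simp [altList] at this

theorem mul_of_zpow_eq_one [DecidableEq ι] [∀ i, DecidableEq (M i)] {i j : ι} (hij : i ≠ j)
    {u : M i} {v : M j}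
    (hu : u ≠ 1) (hv : v ≠ 1) {k : ℤ} (h : (of u * of v) ^ k = 1) : k = 0 := by
  by_contra hk
  rcases lt_trichotomy k 0 with hlt | rfl | hgt
  · have h2 : (of v⁻¹ * of u⁻¹ : Monoid.CoprodI M) = (of u * of v)⁻¹ := by
      rw [mul_inv_rev, map_inv, map_inv]
    have h' : (of v⁻¹ * of u⁻¹) ^ (-k).toNat = 1 := by
      rw [h2, inv_pow, ← zpow_natCast, Int.toNat_of_nonneg (by omega : (0:ℤ) ≤ -k), zpow_neg, h,
        inv_one, inv_one]
    exact mul_of_pow_ne_one hij.symm (inv_ne_one.2 hv) (inv_ne_one.2 hu)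
      (by omega : (-k).toNat ≠ 0) h'
  · exact hk rfl
  · have h' : (of u * of v) ^ k.toNat = 1 := by
      rw [← zpow_natCast, Int.toNat_of_nonneg (by omega)]; exact h
    exact mul_of_pow_ne_one hij hu hv (by omega : k.toNat ≠ 0) h'

end TKAux

namespace TK

/-- The family `(ℤ/n, ℤ/m)` indexed by `Fin 2`. -/
abbrev Fam (n m : ℕ) : Fin 2 → Type := fun i => Multiplicative (ZMod (if i = 0 then n else m))

/-- The generator of `ℤ/n` at index 0. -/
def a0 (n m : ℕ) : Fam n m 0 := Multiplicative.ofAdd (1 : ZMod n)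

/-- The generator of `ℤ/m` at index 1. -/
def b1 (n m : ℕ) : Fam n m 1 := Multiplicative.ofAdd (1 : ZMod m)

lemma a0_pow (n m : ℕ) : a0 n m ^ n = 1 := by
  show Multiplicative.ofAdd (1 : ZMod n) ^ n = 1
  rw [← ofAdd_nsmul]
  simp [nsmul_eq_mul, ZMod.natCast_self]

lemma b1_pow (n m : ℕ) : b1 n m ^ m = 1 := by
  show Multiplicative.ofAdd (1 : ZMod m) ^ m = 1
  rw [← ofAdd_nsmul]
  simp [nsmul_eq_mul, ZMod.natCast_self]

lemma a0_ne_one (n m : ℕ) (hn : 2 ≤ n) : a0 n m ≠ 1 := by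
  haveI : Fact (1 < n) := ⟨hn⟩
  intro h
  have h2 := congrArg Multiplicative.toAdd h
  simp only [a0, toAdd_ofAdd, toAdd_one] at h2
  exact one_ne_zero (α := ZMod n) h2
  

lemma b1_ne_one (n m : ℕ) (hm : 2 ≤ m) : b1 n m ≠ 1 := by
  haveI : Fact (1 < m) := ⟨hm⟩
  intro h
  have h2 := congrArg Multiplicative.toAdd h
  simp only [b1, toAdd_ofAdd, toAdd_one] at h2
  exact one_ne_zero (α := ZMod m) h2

open Monoid

/-- Degree map generators. -/
def fZ (n m : ℕ) : Fin 2 → Multiplicative ℤ :=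
  ![Multiplicative.ofAdd (m : ℤ), Multiplicative.ofAdd (n : ℤ)]

lemma fZ_rel (n m : ℕ) : ∀ r ∈ torusRels n m, FreeGroup.lift (fZ n m) r = 1 := by
  intro r hr
  simp only [torusRels, Set.mem_singleton_iff] at hr
  subst hr
  simp only [map_mul, map_inv, map_pow, FreeGroup.lift_apply_of, fZ, Matrix.cons_val_zero,
    Matrix.cons_val_one, Matrix.head_cons]
  rw [← ofAdd_nsmul, ← ofAdd_nsmul]
  have : (n • (m : ℤ)) = (m • (n : ℤ)) := by simp [nsmul_eq_mul]; ring
  rw [this]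
  simp

/-- Map to the free product of cyclic groups. -/
def fC (n m : ℕ) : Fin 2 → Monoid.CoprodI (Fam n m) :=
  ![Monoid.CoprodI.of (a0 n m), Monoid.CoprodI.of (b1 n m)]

lemma fC_rel (n m : ℕ) : ∀ r ∈ torusRels n m, FreeGroup.lift (fC n m) r = 1 := by
  intro r hr
  simp only [torusRels, Set.mem_singleton_iff] at hr
  subst hr
  simp only [map_mul, map_inv, map_pow, FreeGroup.lift_apply_of, fC, Matrix.cons_val_zero,
    Matrix.cons_val_one, Matrix.head_cons]
  rw [← map_pow, ← map_pow, a0_pow, b1_pow]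
  simp

/-- Degree homomorphism. -/
def φZ (n m : ℕ) : TorusKnotGroup n m →* Multiplicative ℤ :=
  PresentedGroup.toGroup (fZ_rel n m)

/-- Quotient homomorphism to `ℤ/n * ℤ/m`. -/
def φC (n m : ℕ) : TorusKnotGroup n m →* Monoid.CoprodI (Fam n m) :=
  PresentedGroup.toGroup (fC_rel n m)

lemma φZ_A (n m : ℕ) : φZ n m (tkA n m) = Multiplicative.ofAdd (m : ℤ) := by
  show PresentedGroup.toGroup (fZ_rel n m) (PresentedGroup.of 0) = _
  simp [fZ]

lemma φZ_B (n m : ℕ) : φZ n m (tkB n m) = Multiplicative.ofAdd (n : ℤ) := by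
  show PresentedGroup.toGroup (fZ_rel n m) (PresentedGroup.of 1) = _
  simp [fZ]

lemma φC_A (n m : ℕ) : φC n m (tkA n m) = Monoid.CoprodI.of (a0 n m) := by
  show PresentedGroup.toGroup (fC_rel n m) (PresentedGroup.of 0) = _
  simp [fC]

lemma φC_B (n m : ℕ) : φC n m (tkB n m) = Monoid.CoprodI.of (b1 n m) := by
  show PresentedGroup.toGroup (fC_rel n m) (PresentedGroup.of 1) = _
  simp [fC]

end TK

theorem torusKnotGroup_contains_Z2 (n m : ℕ) (hn : 2 ≤ n) (hm : 2 ≤ m) :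
    Commute (tkA n m ^ n) (tkB n m * tkA n m) ∧
    Nonempty ((Subgroup.closure {tkA n m ^ n, tkB n m * tkA n m} : Subgroup (TorusKnotGroup n m))
      ≃* Multiplicative (ℤ × ℤ)) := by
  classical
  -- the defining relation
  have hrel : tkA n m ^ n = tkB n m ^ m := by
    have h : (PresentedGroup.mk (torusRels n m)) (FreeGroup.of 0 ^ n * (FreeGroup.of 1 ^ m)⁻¹)
        = 1 := by
      apply (QuotientGroup.eq_one_iff _).2
      exact Subgroup.subset_normalClosure rfl
    rw [map_mul, map_inv, map_pow, map_pow] at h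
    exact mul_inv_eq_one.1 h
  have hcA : Commute (tkA n m ^ n) (tkA n m) := (Commute.refl (tkA n m)).pow_left n
  have hcB : Commute (tkA n m ^ n) (tkB n m) := by
    rw [hrel]; exact (Commute.refl (tkB n m)).pow_left m
  have hc : Commute (tkA n m ^ n) (tkB n m * tkA n m) := hcB.mul_right hcA
  refine ⟨hc, ?_⟩
  set x := tkA n m ^ n with hx
  set y := tkB n m * tkA n m with hy
  -- the homomorphism ℤ² → Λ
  let χ : Multiplicative (ℤ × ℤ) →* TorusKnotGroup n m :=
    (MonoidHom.noncommCoprod (zpowersHom _ x) (zpowersHom _ y)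
      (fun p q => hc.zpow_zpow _ _)).comp (MulEquiv.prodMultiplicative (G := ℤ) (H := ℤ)).toMonoidHom
  have hχ : ∀ k l : ℤ, χ (Multiplicative.ofAdd (k, l)) = x ^ k * y ^ l := fun k l => rfl
  -- values of the detecting homomorphisms
  have hZx : Multiplicative.toAdd (TK.φZ n m x) = (n * m : ℤ) := by
    rw [hx, map_pow, TK.φZ_A]
    simp
  have hZy : Multiplicative.toAdd (TK.φZ n m y) = (n + m : ℤ) := by
    rw [hy, map_mul, TK.φZ_A, TK.φZ_B]
    simp
  have hCx : TK.φC n m x = 1 := by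
    rw [hx, map_pow, TK.φC_A, ← map_pow, TK.a0_pow, map_one]
  have hCy : TK.φC n m y = Monoid.CoprodI.of (TK.b1 n m) * Monoid.CoprodI.of (TK.a0 n m) := by
    rw [hy, map_mul, TK.φC_A, TK.φC_B]
  -- injectivity
  have hinj : Function.Injective χ := by
    rw [injective_iff_map_eq_one]
    intro p hp
    have hpq : p = Multiplicative.ofAdd ((Multiplicative.toAdd p).1,
        (Multiplicative.toAdd p).2) := by simp
    set k := (Multiplicative.toAdd p).1 with hk
    set l := (Multiplicative.toAdd p).2 with hl
    rw [hpq, hχ] at hp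
    -- second component : l = 0
    have h2 := congrArg (TK.φC n m) hp
    simp only [map_mul, map_zpow, map_one, hCx, hCy, one_zpow, one_mul] at h2
    have hl0 : l = 0 := TKAux.mul_of_zpow_eq_one (by decide : (1 : Fin 2) ≠ 0)
      (TK.b1_ne_one n m hm) (TK.a0_ne_one n m hn) h2
    -- first component : k = 0
    have h3 := congrArg (fun g => Multiplicative.toAdd (TK.φZ n m g)) hp
    simp only [map_mul, map_zpow, map_one, toAdd_mul, toAdd_zpow, toAdd_one, hZx, hZy,
      hl0, zero_zsmul, add_zero, smul_eq_mul, zero_mul] at h3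
    have hk0 : k = 0 := by
      rcases mul_eq_zero.1 h3 with h | h
      · exact h
      · exfalso
        rcases mul_eq_zero.1 h with h' | h' <;> omega
    rw [hpq, hk0, hl0]
    rfl
  -- range
  have hrange : χ.range = Subgroup.closure {x, y} := by
    apply le_antisymm
    · rintro g ⟨p, rfl⟩
      have hpq : p = Multiplicative.ofAdd ((Multiplicative.toAdd p).1,
          (Multiplicative.toAdd p).2) := by simp
      rw [hpq, hχ]
      exact Subgroup.mul_mem _
        (Subgroup.zpow_mem _ (Subgroup.subset_closure (by simp)) _)
        (Subgroup.zpow_mem _ (Subgroup.subset_closure (by simp)) _)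
    · rw [Subgroup.closure_le]
      rintro g hg
      rcases hg with rfl | rfl
      · exact ⟨Multiplicative.ofAdd (1, 0), by rw [hχ]; simp⟩
      · exact ⟨Multiplicative.ofAdd (0, 1), by rw [hχ]; simp⟩
  exact ⟨(MulEquiv.subgroupCongr hrange.symm).trans (MonoidHom.ofInjective hinj).symm⟩
end
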